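/- Let G be a finite group and let ρ be a finite-dimensional complex representation of G with character χ (so χ(g) is the trace of ρ(g)). If χ(g) is a rational number for every g ∈ G, then for every g ∈ G and every integer i coprime to the order of g, one has χ(g^i) = χ(g). In particular, rational-valued characters are constant on divisions. -/

import Mathlib

open Module LinearMap

lemma auxA {V : Type*} [AddCommGroup V] [Module ℂ V] [FiniteDimensional ℂ V]
    (A : Module.End ℂ V) (n : ℕ) (hn : 0 < n) (hA : A ^ n = 1) :
    ∃ (s : Finset ℂ) (d : ℂ → ℕ), (∀ μ ∈ s, μ ^ n = 1) ∧
      ∀ k : ℕ, LinearMap.trace ℂ V (A ^ k) = ∑ μ ∈ s, (d μ : ℂ) * μ ^ k := by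
  classical
  have hsq : Squarefree ((Polynomial.X : Polynomial ℂ) ^ n - 1) :=
    (Polynomial.X_pow_sub_one_separable_iff.mpr (by
      exact_mod_cast (Nat.cast_ne_zero (R := ℂ)).mpr hn.ne')).squarefree
  have hss : A.IsFinitelySemisimple := by
    refine (Module.End.isSemisimple_of_squarefree_aeval_eq_zero hsq ?_).isFinitelySemisimple
    simp [map_sub, map_pow, hA]
  -- eigenspace decomposition
  have hpow : ∀ (μ : ℂ) (x : V), x ∈ A.eigenspace μ → ∀ k : ℕ, (A ^ k) x = μ ^ k • x := by
    intro μ x hx k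
    induction k with
    | zero => simp
    | succ k ih =>
      rw [pow_succ', pow_succ, Module.End.mul_apply, ih, map_smul,
        Module.End.mem_eigenspace_iff.mp hx, smul_smul, mul_comm]
  have hsup : ⨆ μ : ℂ, A.eigenspace μ = ⊤ := by
    have := Module.End.iSup_maxGenEigenspace_eq_top A
    simpa [hss.maxGenEigenspace_eq_eigenspace] using this
  have hind := Module.End.eigenspaces_iSupIndep A
  have hInt : DirectSum.IsInternal (fun μ : ℂ => A.eigenspace μ) :=
    DirectSum.isInternal_submodule_of_iSupIndep_of_iSup_eq_top hind hsup
  have hfin : {μ : ℂ | A.eigenspace μ ≠ ⊥}.Finite :=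
    WellFoundedGT.finite_ne_bot_of_iSupIndep hind
  refine ⟨hfin.toFinset, fun μ => Module.finrank ℂ (A.eigenspace μ), ?_, ?_⟩
  · intro μ hμ
    rw [Set.Finite.mem_toFinset] at hμ
    obtain ⟨x, hx, hx0⟩ := Submodule.exists_mem_ne_zero_of_ne_bot hμ
    have h1 : (A ^ n) x = μ ^ n • x := hpow μ x hx n
    rw [hA] at h1
    have : (μ ^ n - 1) • x = 0 := by
      rw [sub_smul, one_smul, ← h1]; simp
    rcases smul_eq_zero.mp this with h | h
    · exact sub_eq_zero.mp h
    · exact absurd h hx0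
  · intro k
    have hmt : ∀ μ : ℂ, Set.MapsTo (A ^ k) (A.eigenspace μ) (A.eigenspace μ) := by
      intro μ x hx
      rw [SetLike.mem_coe] at hx ⊢
      rw [hpow μ x hx k]
      exact Submodule.smul_mem _ _ hx
    rw [LinearMap.trace_eq_sum_trace_restrict' hInt hfin hmt]
    refine Finset.sum_congr rfl fun μ hμ => ?_
    have hres : (A ^ k).restrict (hmt μ) = (μ ^ k) • LinearMap.id := by
      ext x
      have := hpow μ x.1 x.2 k
      change (A ^ k) x.1 = _
      rw [this]
      simp
    rw [hres, map_smul, LinearMap.trace_id, smul_eq_mul, mul_comm]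
lemma auxB (n : ℕ) (hn : 0 < n) (s : Finset ℂ) (d : ℂ → ℕ)
    (hroot : ∀ μ ∈ s, μ ^ n = 1) (j : ℕ) (hj : Nat.Coprime j n)
    (q : ℚ) (hq : ∑ μ ∈ s, (d μ : ℂ) * μ = (q : ℂ)) :
    ∑ μ ∈ s, (d μ : ℂ) * μ ^ j = (q : ℂ) := by
  classical
  haveI : NeZero n := ⟨hn.ne'⟩
  set n' : ℕ+ := ⟨n, hn⟩ with hn'
  have hcoe : (n' : ℕ) = n := rfl
  obtain ⟨ζ, hζ⟩ : ∃ ζ : ℂ, IsPrimitiveRoot ζ n := ⟨_, Complex.isPrimitiveRoot_exp n hn.ne'⟩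
  set K := Algebra.adjoin ℚ ({ζ} : Set ℂ) with hK
  have hζK : ζ ∈ K := Algebra.self_mem_adjoin_singleton ℚ ζ
  have hmem : ∀ μ ∈ s, μ ∈ K := by
    intro μ hμ
    obtain ⟨a, -, rfl⟩ := hζ.eq_pow_of_pow_eq_one (hroot μ hμ)
    exact pow_mem hζK a
  haveI : IsCyclotomicExtension {(n' : ℕ)} ℚ K :=
    IsPrimitiveRoot.adjoin_isCyclotomicExtension ℚ (n := n') hζ
  have hirr : Irreducible (Polynomial.cyclotomic n' ℚ) :=
    Polynomial.cyclotomic.irreducible_rat n'.pos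
  set u : (ZMod n)ˣ := ZMod.unitOfCoprime j hj with hu'
  set σ : K ≃ₐ[ℚ] K := (IsCyclotomicExtension.autEquivPow K hirr).symm u with hσ'
  set ζ₀ := IsCyclotomicExtension.zeta n' ℚ K with hζ₀'
  have hζ₀ : IsPrimitiveRoot ζ₀ n := IsCyclotomicExtension.zeta_spec n' ℚ K
  have hu : (hζ₀.autToPow ℚ σ : ZMod n) = (u : ZMod n) := by
    have := (IsCyclotomicExtension.autEquivPow K hirr).apply_symm_apply u
    rw [IsCyclotomicExtension.autEquivPow_apply] at this
    exact congrArg Units.val this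
  set v : ℕ := ((u : ZMod n)).val with hv'
  have hσspec : ∀ μ' : K, μ' ^ n = 1 → σ μ' = μ' ^ v := by
    intro μ' h1
    obtain ⟨a, -, rfl⟩ := hζ₀.eq_pow_of_pow_eq_one h1
    have hspec := hζ₀.autToPow_spec ℚ σ
    rw [hu] at hspec
    rw [map_pow, ← hspec, ← pow_mul, ← pow_mul, mul_comm]
  have hvmod : v = j % n := by rw [hv', hu', ZMod.coe_unitOfCoprime, ZMod.val_natCast]
  have hpowmod : ∀ (μ : ℂ), μ ^ n = 1 → μ ^ j = μ ^ v := by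
    intro μ h1
    rw [hvmod]
    conv_lhs => rw [← Nat.div_add_mod j n]
    rw [pow_add, pow_mul, h1, one_pow, one_mul]
  -- the sum inside K
  set S : K := ∑ μ ∈ s.attach, (d μ.1 : K) * ⟨μ.1, hmem μ.1 μ.2⟩ with hS
  have hval : ∀ m : ℕ, (K.val (∑ μ ∈ s.attach, (d μ.1 : K) * (⟨μ.1, hmem μ.1 μ.2⟩ : K) ^ m) : ℂ)
      = ∑ μ ∈ s, (d μ : ℂ) * μ ^ m := by
    intro m
    rw [map_sum, ← Finset.sum_attach s (fun μ => (d μ : ℂ) * μ ^ m)]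
    refine Finset.sum_congr rfl fun μ _ => ?_
    simp
  have hSval : (K.val S : ℂ) = (q : ℂ) := by
    have h1 := hval 1
    simp only [pow_one] at h1
    rw [hS, h1, hq]
  have hSrat : S = algebraMap ℚ K q := by
    apply Subtype.ext
    show (K.val S : ℂ) = _
    rw [hSval]
    simp
  have hfix : σ S = S := by rw [hSrat]; exact σ.commutes q
  have hpown : ∀ μ ∈ s.attach, ((⟨μ.1, hmem μ.1 μ.2⟩ : K)) ^ n = 1 := by
    intro μ _
    apply Subtype.ext
    push_cast
    exact hroot μ.1 μ.2
  have hσS : σ S = ∑ μ ∈ s.attach, (d μ.1 : K) * (⟨μ.1, hmem μ.1 μ.2⟩ : K) ^ v := by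
    rw [hS, map_sum]
    refine Finset.sum_congr rfl fun μ hμ => ?_
    rw [map_mul, hσspec _ (hpown μ hμ), map_natCast]
  calc ∑ μ ∈ s, (d μ : ℂ) * μ ^ j = ∑ μ ∈ s, (d μ : ℂ) * μ ^ v :=
        Finset.sum_congr rfl fun μ hμ => by rw [hpowmod μ (hroot μ hμ)]
    _ = K.val (σ S) := by rw [hσS, hval v]
    _ = (q : ℂ) := by rw [hfix, hSval]





/-- A rational-valued character of a finite-dimensional complex representation
of a finite group is constant on divisions: χ(g^i) = χ(g) whenever
gcd(i, ord g) = 1. -/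
theorem stmt_1 {G : Type*} [Group G] [Finite G]
    {V : Type*} [AddCommGroup V] [Module ℂ V] [FiniteDimensional ℂ V]
    (ρ : Representation ℂ G V)
    (hrat : ∀ g : G, ∃ q : ℚ, LinearMap.trace ℂ V (ρ g) = (q : ℂ)) :
    ∀ (g : G) (i : ℤ), Int.gcd i (orderOf g) = 1 →
      LinearMap.trace ℂ V (ρ (g ^ i)) = LinearMap.trace ℂ V (ρ g) := by
  intro g i hgcd
  set n := orderOf g with hn'
  have hn : 0 < n := orderOf_pos g
  set A := ρ g with hA'
  have hA : A ^ n = 1 := by rw [hA', ← map_pow, pow_orderOf_eq_one, map_one]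
  have hnz : (n : ℤ) ≠ 0 := by exact_mod_cast hn.ne'
  have hin : 0 ≤ i % (n : ℤ) := Int.emod_nonneg i hnz
  set j : ℕ := (i % (n : ℤ)).toNat with hj'
  have hjZ : (j : ℤ) = i % (n : ℤ) := Int.toNat_of_nonneg hin
  have hgj : g ^ i = g ^ j := by
    rw [← zpow_natCast, hjZ, hn', zpow_mod_orderOf]
  have hcop : Nat.Coprime j n := by
    have h1 : IsCoprime i (n : ℤ) := Int.isCoprime_iff_gcd_eq_one.mpr hgcd
    have h2 : IsCoprime ((j : ℤ)) (n : ℤ) := by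
      rw [hjZ, Int.emod_def, sub_eq_add_neg, neg_mul_eq_mul_neg]
      exact h1.add_mul_left_left _
    have := Int.isCoprime_iff_gcd_eq_one.mp h2
    rwa [Int.gcd_natCast_natCast] at this
  obtain ⟨q, hq⟩ := hrat g
  obtain ⟨s, d, hroot, htr⟩ := auxA A n hn hA
  have h1 : ∑ μ ∈ s, (d μ : ℂ) * μ = (q : ℂ) := by
    have := htr 1
    simp only [pow_one] at this
    rw [← this]
    exact hq
  have h2 := auxB n hn s d hroot j hcop q h1
  rw [hgj]
  calc LinearMap.trace ℂ V (ρ (g ^ j)) = LinearMap.trace ℂ V (A ^ j) := by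
        rw [hA', map_pow]
    _ = (q : ℂ) := by rw [htr j, h2]
    _ = LinearMap.trace ℂ V (ρ g) := hq.symm
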